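/- For every K > 0 and every q ≥ 1 there exist a function T : [0,∞) → [0,∞) of class C² and a constant c depending only on q such that: (i) T is strictly increasing and convex on [0,∞), and T(t) = t^{2q} for all t ∈ [0,K]; (ii) T(t) + T′(t)·t + T″(t)·t² ≤ c · min{K^{2q−2} t², t^{2q}} for all t ≥ 0; moreover 0 ≤ T″(t)·t − T′(t) ≤ 2(q−1) T′(t) for all t ≥ 0, and T″(t)·t² ≤ c T′(t)·t ≤ c T(t) for all t ≥ 0. -/

import Mathlib

open Set

/-- First derivative of a function on `[0,∞)`. -/
noncomputable def d1 (T : ℝ → ℝ) : ℝ → ℝ := derivWithin T (Set.Ici 0)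

/-- Second derivative of a function on `[0,∞)`. -/
noncomputable def d2 (T : ℝ → ℝ) : ℝ → ℝ := derivWithin (d1 T) (Set.Ici 0)

/-- Quadratic extension piece of the truncated power function. -/
noncomputable def truncG (K p : ℝ) : ℝ → ℝ := fun t =>
  K ^ p + p * K ^ (p - 1) * (t - K) + p * (p - 1) / 2 * K ^ (p - 2) * (t - K) ^ 2

/-- The truncated power function. -/
noncomputable def truncT (K p : ℝ) : ℝ → ℝ := fun t =>
  if t ≤ K then t ^ p else truncG K p t

/-- Its first derivative (explicit formula). -/
noncomputable def truncT1 (K p : ℝ) : ℝ → ℝ := fun t =>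
  if t ≤ K then p * t ^ (p - 1) else p * K ^ (p - 1) + p * (p - 1) * K ^ (p - 2) * (t - K)

/-- Its second derivative (explicit formula). -/
noncomputable def truncT2 (K p : ℝ) : ℝ → ℝ := fun t =>
  if t ≤ K then p * (p - 1) * t ^ (p - 2) else p * (p - 1) * K ^ (p - 2)

lemma truncT_of_le (K p t : ℝ) (h : t ≤ K) : truncT K p t = t ^ p := by
  simp only [truncT, if_pos h]

lemma truncT_of_gt (K p t : ℝ) (h : ¬ t ≤ K) : truncT K p t = truncG K p t := by
  simp only [truncT, if_neg h]

lemma truncT1_of_le (K p t : ℝ) (h : t ≤ K) : truncT1 K p t = p * t ^ (p - 1) := by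
  simp only [truncT1, if_pos h]

lemma truncT1_of_gt (K p t : ℝ) (h : ¬ t ≤ K) :
    truncT1 K p t = p * K ^ (p - 1) + p * (p - 1) * K ^ (p - 2) * (t - K) := by
  simp only [truncT1, if_neg h]

lemma truncT2_of_le (K p t : ℝ) (h : t ≤ K) : truncT2 K p t = p * (p - 1) * t ^ (p - 2) := by
  simp only [truncT2, if_pos h]

lemma truncT2_of_gt (K p t : ℝ) (h : ¬ t ≤ K) : truncT2 K p t = p * (p - 1) * K ^ (p - 2) := by
  simp only [truncT2, if_neg h]

lemma truncT_eq_on_Ici (K p : ℝ) :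
    ∀ x ∈ Ici K, truncT K p x = truncG K p x := by
  intro x hx
  rcases eq_or_lt_of_le (Set.mem_Ici.1 hx) with h | h
  · subst h
    simp [truncT, truncG]
  · simp [truncT, not_le.2 h]

lemma truncT1_eq_on_Ici (K p : ℝ) :
    ∀ x ∈ Ici K, truncT1 K p x
      = p * K ^ (p - 1) + p * (p - 1) * K ^ (p - 2) * (x - K) := by
  intro x hx
  rcases eq_or_lt_of_le (Set.mem_Ici.1 hx) with h | h
  · subst h
    simp [truncT1]
  · simp [truncT1, not_le.2 h]

lemma truncG_hasDerivAt (K p : ℝ) (t : ℝ) :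
    HasDerivAt (truncG K p)
      (p * K ^ (p - 1) + p * (p - 1) * K ^ (p - 2) * (t - K)) t := by
  have h1 : HasDerivAt (fun t : ℝ => t - K) 1 t := (hasDerivAt_id t).sub_const K
  have h2 : HasDerivAt (fun t : ℝ => (t - K) ^ 2) (2 * (t - K)) t := by
    simpa using h1.fun_pow 2
  have := ((h1.const_mul (p * K ^ (p - 1))).const_add (K ^ p)).add
    (h2.const_mul (p * (p - 1) / 2 * K ^ (p - 2)))
  exact this.congr_deriv (by ring)

lemma truncT_hasDerivAt (K p : ℝ) (hp2 : 2 ≤ p) (t : ℝ) :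
    HasDerivAt (truncT K p) (truncT1 K p t) t := by
  have hf' : ∀ s : ℝ, HasDerivAt (fun s : ℝ => s ^ p) (p * s ^ (p - 1)) s := fun s =>
    Real.hasDerivAt_rpow_const (Or.inr (by linarith))
  rcases lt_trichotomy t K with h | h | h
  · rw [truncT1_of_le K p t h.le]
    refine (hf' t).congr_of_eventuallyEq ?_
    filter_upwards [Iio_mem_nhds h] with x hx
    exact truncT_of_le K p x (le_of_lt hx)
  · subst h
    rw [truncT1_of_le t p t le_rfl]
    have left : HasDerivWithinAt (truncT t p) (p * t ^ (p - 1)) (Iic t) t :=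
      ((hf' t).hasDerivWithinAt).congr (fun x hx => truncT_of_le t p x hx)
        (truncT_of_le t p t le_rfl)
    have right : HasDerivWithinAt (truncT t p) (p * t ^ (p - 1)) (Ici t) t := by
      have hgd : HasDerivAt (truncG t p) (p * t ^ (p - 1)) t := by
        have := truncG_hasDerivAt t p t
        simpa using this
      exact (hgd.hasDerivWithinAt).congr
        (fun x hx => truncT_eq_on_Ici t p x hx)
        (truncT_eq_on_Ici t p t Set.self_mem_Ici)
    have := left.union right
    rwa [Iic_union_Ici, hasDerivWithinAt_univ] at this
  · rw [truncT1_of_gt K p t (not_le.2 h)]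
    refine (truncG_hasDerivAt K p t).congr_of_eventuallyEq ?_
    filter_upwards [Ioi_mem_nhds h] with x hx
    exact truncT_of_gt K p x (not_le.2 hx)

lemma truncT1_hasDerivAt (K p : ℝ) (hp2 : 2 ≤ p) (t : ℝ) :
    HasDerivAt (truncT1 K p) (truncT2 K p t) t := by
  have hf'' : ∀ s : ℝ, HasDerivAt (fun s : ℝ => p * s ^ (p - 1))
      (p * (p - 1) * s ^ (p - 2)) s := by
    intro s
    have := (Real.hasDerivAt_rpow_const (x := s) (p := p - 1)
      (Or.inr (by linarith))).const_mul p
    refine this.congr_deriv ?_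
    rw [show p - 1 - 1 = p - 2 by ring]
    ring
  have haff : ∀ s : ℝ, HasDerivAt
      (fun s : ℝ => p * K ^ (p - 1) + p * (p - 1) * K ^ (p - 2) * (s - K))
      (p * (p - 1) * K ^ (p - 2)) s := by
    intro s
    have h1 : HasDerivAt (fun s : ℝ => s - K) 1 s := (hasDerivAt_id s).sub_const K
    have := (h1.const_mul (p * (p - 1) * K ^ (p - 2))).const_add (p * K ^ (p - 1))
    simpa using this
  rcases lt_trichotomy t K with h | h | h
  · rw [truncT2_of_le K p t h.le]
    refine (hf'' t).congr_of_eventuallyEq ?_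
    filter_upwards [Iio_mem_nhds h] with x hx
    exact truncT1_of_le K p x (le_of_lt hx)
  · subst h
    rw [truncT2_of_le t p t le_rfl]
    have left : HasDerivWithinAt (truncT1 t p) (p * (p - 1) * t ^ (p - 2)) (Iic t) t :=
      ((hf'' t).hasDerivWithinAt).congr (fun x hx => truncT1_of_le t p x hx)
        (truncT1_of_le t p t le_rfl)
    have right : HasDerivWithinAt (truncT1 t p) (p * (p - 1) * t ^ (p - 2)) (Ici t) t :=
      ((haff t).hasDerivWithinAt).congr
        (fun x hx => truncT1_eq_on_Ici t p x hx)
        (truncT1_eq_on_Ici t p t Set.self_mem_Ici)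
    have := left.union right
    rwa [Iic_union_Ici, hasDerivWithinAt_univ] at this
  · rw [truncT2_of_gt K p t (not_le.2 h)]
    refine (haff t).congr_of_eventuallyEq ?_
    filter_upwards [Ioi_mem_nhds h] with x hx
    exact truncT1_eq_on_Ici K p x (Set.mem_Ici.2 (le_of_lt hx))

lemma truncT_d1 (K p : ℝ) (hp2 : 2 ≤ p) :
    ∀ t ∈ Ici (0:ℝ), d1 (truncT K p) t = truncT1 K p t := fun t ht =>
  ((truncT_hasDerivAt K p hp2 t).hasDerivWithinAt).derivWithin (uniqueDiffOn_Ici 0 t ht)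

lemma truncT_d2 (K p : ℝ) (hp2 : 2 ≤ p) :
    ∀ t ∈ Ici (0:ℝ), d2 (truncT K p) t = truncT2 K p t := by
  intro t ht
  have h1 : d2 (truncT K p) t = derivWithin (truncT1 K p) (Ici 0) t :=
    derivWithin_congr (fun x hx => truncT_d1 K p hp2 x hx) (truncT_d1 K p hp2 t ht)
  rw [h1]
  exact ((truncT1_hasDerivAt K p hp2 t).hasDerivWithinAt).derivWithin
    (uniqueDiffOn_Ici 0 t ht)

set_option maxHeartbeats 2000000 in
/-- The main auxiliary result: all nine properties for `truncT K p`. -/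
theorem trunc_main (p : ℝ) (hp2 : 2 ≤ p) (K : ℝ) (hK : 0 < K) :
    (∀ t, 0 ≤ t → 0 ≤ truncT K p t) ∧
    ContDiffOn ℝ 2 (truncT K p) (Set.Ici 0) ∧
    StrictMonoOn (truncT K p) (Set.Ici 0) ∧
    ConvexOn ℝ (Set.Ici 0) (truncT K p) ∧
    (∀ t ∈ Set.Icc 0 K, truncT K p t = t ^ p) ∧
    (∀ t, 0 ≤ t →
      truncT K p t + d1 (truncT K p) t * t + d2 (truncT K p) t * t ^ 2
        ≤ 10 * (p + 1) ^ 2 * min (K ^ (p - 2) * t ^ 2) (t ^ p)) ∧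
    (∀ t, 0 ≤ t → 0 ≤ d2 (truncT K p) t * t - d1 (truncT K p) t) ∧
    (∀ t, 0 ≤ t → d2 (truncT K p) t * t - d1 (truncT K p) t
        ≤ (p - 2) * d1 (truncT K p) t) ∧
    (∀ t, 0 ≤ t → d2 (truncT K p) t * t ^ 2
        ≤ 10 * (p + 1) ^ 2 * (d1 (truncT K p) t * t)) ∧
    (∀ t, 0 ≤ t → d1 (truncT K p) t * t ≤ 10 * (p + 1) ^ 2 * truncT K p t) := by
  have hp0 : (0:ℝ) ≤ p := by linarith
  have hpm20 : (0:ℝ) ≤ p - 2 := by linarith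
  have hKp : ∀ r : ℝ, 0 < K ^ r := fun r => Real.rpow_pos_of_pos hK r
  have hbe : K ^ (p - 1) = K ^ (p - 2) * K := by
    rw [show p - 1 = (p - 2) + 1 by ring, Real.rpow_add hK, Real.rpow_one]
  have hab : K ^ p = K ^ (p - 2) * K ^ 2 := by
    have h := Real.rpow_add hK (p - 2) 2
    rw [show p - 2 + 2 = p by ring] at h
    rw [h]
    congr 1
    rw [show ((2:ℝ)) = ((2:ℕ):ℝ) by norm_num, Real.rpow_natCast]
  have hd_T := truncT_hasDerivAt K p hp2
  have hd_T1 := truncT1_hasDerivAt K p hp2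
  have hT1e := truncT_d1 K p hp2
  have hT2e := truncT_d2 K p hp2
  have hz : (0:ℝ) ^ p = 0 := Real.zero_rpow (by linarith)
  have hz1 : (0:ℝ) ^ (p - 1) = 0 := Real.zero_rpow (by linarith)
  -- continuity of T2 on Ici 0
  have hT2cont : ContinuousOn (truncT2 K p) (Ici 0) := by
    have hmin : Continuous fun x : ℝ => min x K := continuous_id.min continuous_const
    have hca : ∀ x : ℝ, ContinuousAt (fun y : ℝ => p * (p - 1) * (min y K) ^ (p - 2)) x := by
      intro x
      exact continuousAt_const.mul
        ((Real.continuousAt_rpow_const _ _ (Or.inr hpm20)).comp hmin.continuousAt)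
    intro x hx
    refine ((hca x).continuousWithinAt).congr ?_ ?_
    · intro y _
      by_cases hy : y ≤ K
      · simp [truncT2, hy, min_eq_left hy]
      · simp [truncT2, hy, min_eq_right (le_of_lt (not_le.1 hy))]
    · by_cases hx2 : x ≤ K
      · simp [truncT2, hx2, min_eq_left hx2]
      · simp [truncT2, hx2, min_eq_right (le_of_lt (not_le.1 hx2))]
  have hTcont : ContinuousOn (truncT K p) (Ici 0) :=
    fun x _ => (hd_T x).continuousAt.continuousWithinAt
  have hdiffT : DifferentiableOn ℝ (truncT K p) (Ici 0) :=
    fun x _ => (hd_T x).differentiableAt.differentiableWithinAt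
  have hsmooth : ContDiffOn ℝ 2 (truncT K p) (Ici 0) := by
    rw [show (2 : WithTop ℕ∞) = 1 + 1 by norm_num,
      contDiffOn_succ_iff_derivWithin (uniqueDiffOn_Ici 0)]
    refine ⟨hdiffT, by simp, ?_⟩
    refine ContDiffOn.congr (f := truncT1 K p) ?_ (fun x hx => hT1e x hx)
    rw [show (1 : WithTop ℕ∞) = 0 + 1 by norm_num,
      contDiffOn_succ_iff_derivWithin (uniqueDiffOn_Ici 0)]
    refine ⟨fun x _ => (hd_T1 x).differentiableAt.differentiableWithinAt, by simp, ?_⟩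
    refine ContDiffOn.congr (f := truncT2 K p) ?_
      (fun x hx => ((hd_T1 x).hasDerivWithinAt).derivWithin (uniqueDiffOn_Ici 0 x hx))
    rw [contDiffOn_zero]
    exact hT2cont
  have hT1pos : ∀ x : ℝ, 0 < x → 0 < truncT1 K p x := by
    intro x hx
    by_cases hxK : x ≤ K
    · have h1 : 0 < x ^ (p - 1) := Real.rpow_pos_of_pos hx _
      rw [truncT1_of_le K p x hxK]
      nlinarith
    · rw [truncT1_of_gt K p x hxK]
      push_neg at hxK
      have h1 : 0 < p * K ^ (p - 1) := by nlinarith [hKp (p - 1)]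
      have h2 : 0 ≤ p * (p - 1) * K ^ (p - 2) * (x - K) := by
        have h3 := (hKp (p - 2)).le
        have hxK' : 0 ≤ x - K := by linarith
        exact mul_nonneg (mul_nonneg (mul_nonneg hp0 (by linarith)) h3) hxK'
      linarith
  have hderivT : deriv (truncT K p) = truncT1 K p := funext fun x => (hd_T x).deriv
  have hderivT1 : deriv (truncT1 K p) = truncT2 K p := funext fun x => (hd_T1 x).deriv
  have hT2nn : ∀ x : ℝ, 0 ≤ x → 0 ≤ truncT2 K p x := by
    intro x hx
    by_cases hxK : x ≤ K
    · rw [truncT2_of_le K p x hxK]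
      have h1 : 0 ≤ x ^ (p - 2) := Real.rpow_nonneg hx _
      exact mul_nonneg (mul_nonneg hp0 (by linarith)) h1
    · rw [truncT2_of_gt K p x hxK]
      exact mul_nonneg (mul_nonneg hp0 (by linarith)) (hKp (p - 2)).le
  have hmono : StrictMonoOn (truncT K p) (Ici 0) := by
    refine strictMonoOn_of_deriv_pos (convex_Ici 0) hTcont ?_
    intro x hx
    rw [interior_Ici] at hx
    rw [hderivT]
    exact hT1pos x hx
  have hconv : ConvexOn ℝ (Ici 0) (truncT K p) := by
    refine convexOn_of_deriv2_nonneg (convex_Ici 0) hTcont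
      (fun x _ => (hd_T x).differentiableAt.differentiableWithinAt)
      (fun x _ => by
        rw [hderivT]; exact (hd_T1 x).differentiableAt.differentiableWithinAt) ?_
    intro x hx
    rw [interior_Ici] at hx
    have he : deriv^[2] (truncT K p) x = deriv (deriv (truncT K p)) x := rfl
    rw [he, hderivT, hderivT1]
    exact hT2nn x hx.le
  have hTnn : ∀ t, 0 ≤ t → 0 ≤ truncT K p t := by
    intro t ht
    by_cases htK : t ≤ K
    · rw [truncT_of_le K p t htK]
      exact Real.rpow_nonneg ht _
    · rw [truncT_of_gt K p t htK, truncG]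
      push_neg at htK
      have h1 := (hKp p).le
      have h2 := (hKp (p - 1)).le
      have h3 := (hKp (p - 2)).le
      have h4 : 0 ≤ t - K := by linarith
      have A : 0 ≤ p * K ^ (p - 1) * (t - K) := mul_nonneg (mul_nonneg hp0 h2) h4
      have B : 0 ≤ p * (p - 1) / 2 * K ^ (p - 2) * (t - K) ^ 2 :=
        mul_nonneg (mul_nonneg (by nlinarith) h3) (sq_nonneg (t - K))
      linarith
  refine ⟨hTnn, hsmooth, hmono, hconv, fun t ht => truncT_of_le K p t ht.2, ?_, ?_, ?_, ?_, ?_⟩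
  · -- main growth estimate
    intro t ht
    rw [hT1e t ht, hT2e t ht]
    rcases eq_or_lt_of_le ht with h0 | h0
    · rw [← h0]
      have hT0 : truncT K p 0 = 0 := by
        rw [truncT_of_le K p 0 hK.le, hz]
      have hmin0 : min (K ^ (p - 2) * (0:ℝ) ^ 2) ((0:ℝ) ^ p) = 0 := by
        rw [hz]
        simp
      rw [hT0, hmin0]
      simp
    · by_cases htK : t ≤ K
      · have hA : t ^ (p - 1) * t = t ^ p := by
          have h := Real.rpow_add h0 (p - 1) 1
          rw [show p - 1 + 1 = p by ring, Real.rpow_one] at h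
          exact h.symm
        have hB : t ^ (p - 2) * t ^ 2 = t ^ p := by
          have h := Real.rpow_add h0 (p - 2) 2
          rw [show p - 2 + 2 = p by ring] at h
          rw [h]
          congr 1
          rw [show ((2:ℝ)) = ((2:ℕ):ℝ) by norm_num, Real.rpow_natCast]
        have hminr : min (K ^ (p - 2) * t ^ 2) (t ^ p) = t ^ p := by
          refine min_eq_right ?_
          rw [← hB]
          exact mul_le_mul_of_nonneg_right
            (Real.rpow_le_rpow ht htK hpm20) (sq_nonneg t)
        rw [hminr]
        rw [truncT_of_le K p t htK,
          truncT1_of_le K p t htK,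
          truncT2_of_le K p t htK]
        rw [show p * t ^ (p - 1) * t = p * (t ^ (p - 1) * t) by ring, hA,
          show p * (p - 1) * t ^ (p - 2) * t ^ 2
            = p * (p - 1) * (t ^ (p - 2) * t ^ 2) by ring, hB]
        have hint : 0 ≤ (10 * (p + 1) ^ 2 - 1 - p ^ 2) * t ^ p := by
          have h1 : 0 ≤ t ^ p := Real.rpow_nonneg ht _
          have h2 : 0 ≤ (10 * (p + 1) ^ 2 - 1 - p ^ 2) := by nlinarith [sq_nonneg p]
          exact mul_nonneg h2 h1
        linarith [hint]
      · push_neg at htK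
        have h4 : 0 ≤ t - K := by linarith
        have hB : t ^ (p - 2) * t ^ 2 = t ^ p := by
          have h := Real.rpow_add h0 (p - 2) 2
          rw [show p - 2 + 2 = p by ring] at h
          rw [h]
          congr 1
          rw [show ((2:ℝ)) = ((2:ℕ):ℝ) by norm_num, Real.rpow_natCast]
        have hminl : min (K ^ (p - 2) * t ^ 2) (t ^ p) = K ^ (p - 2) * t ^ 2 := by
          refine min_eq_left ?_
          rw [← hB]
          exact mul_le_mul_of_nonneg_right
            (Real.rpow_le_rpow hK.le htK.le hpm20) (sq_nonneg t)
        rw [hminl]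
        rw [truncT_of_gt K p t (not_le.2 htK),
          truncT1_of_gt K p t (not_le.2 htK),
          truncT2_of_gt K p t (not_le.2 htK),
          truncG, hab, hbe]
        have hE : (0:ℝ) ≤ K ^ (p - 2) := (hKp _).le
        have C1 : 0 ≤ (10 * (p + 1) ^ 2 - 1 - p ^ 2) * (K ^ (p - 2) * K ^ 2) := by
          apply mul_nonneg _ (mul_nonneg hE (sq_nonneg K))
          nlinarith [sq_nonneg p]
        have C2 : 0 ≤ (2 * (10 * (p + 1) ^ 2) - 3 * p ^ 2 + p)
            * (K ^ (p - 2) * (K * (t - K))) := by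
          apply mul_nonneg _ (mul_nonneg hE (mul_nonneg hK.le h4))
          nlinarith [sq_nonneg p]
        have C3 : 0 ≤ (10 * (p + 1) ^ 2 - 5 * (p * (p - 1)) / 2)
            * (K ^ (p - 2) * (t - K) ^ 2) := by
          apply mul_nonneg _ (mul_nonneg hE (sq_nonneg (t - K)))
          nlinarith [sq_nonneg p]
        linarith [C1, C2, C3]
  · -- 0 ≤ T2 t * t - T1 t
    intro t ht
    rw [hT1e t ht, hT2e t ht]
    rcases eq_or_lt_of_le ht with h0 | h0
    · rw [← h0]
      rw [truncT1_of_le K p 0 hK.le, hz1]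
      simp
    · by_cases htK : t ≤ K
      · rw [truncT1_of_le K p t htK,
          truncT2_of_le K p t htK]
        have hC : t ^ (p - 2) * t = t ^ (p - 1) := by
          rw [show p - 1 = (p - 2) + 1 by ring, Real.rpow_add h0, Real.rpow_one]
        rw [show p * (p - 1) * t ^ (p - 2) * t = p * (p - 1) * (t ^ (p - 2) * t) by ring, hC]
        have hint : 0 ≤ (p * (p - 1) - p) * t ^ (p - 1) := by
          apply mul_nonneg _ (Real.rpow_nonneg ht _)
          nlinarith
        linarith
      · rw [truncT1_of_gt K p t htK,
          truncT2_of_gt K p t htK, hbe]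
        have hint : 0 ≤ p * (p - 2) * (K ^ (p - 2) * K) :=
          mul_nonneg (mul_nonneg hp0 hpm20) (mul_nonneg (hKp _).le hK.le)
        linarith
  · -- T2 t * t - T1 t ≤ (p-2) T1 t
    intro t ht
    rw [hT1e t ht, hT2e t ht]
    rcases eq_or_lt_of_le ht with h0 | h0
    · rw [← h0]
      rw [truncT1_of_le K p 0 hK.le, hz1]
      simp
    · by_cases htK : t ≤ K
      · rw [truncT1_of_le K p t htK,
          truncT2_of_le K p t htK]
        have hC : t ^ (p - 2) * t = t ^ (p - 1) := by
          rw [show p - 1 = (p - 2) + 1 by ring, Real.rpow_add h0, Real.rpow_one]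
        rw [show p * (p - 1) * t ^ (p - 2) * t = p * (p - 1) * (t ^ (p - 2) * t) by ring, hC]
        nlinarith [Real.rpow_nonneg ht (p - 1)]
      · rw [truncT1_of_gt K p t htK,
          truncT2_of_gt K p t htK, hbe]
        push_neg at htK
        have h4 : 0 ≤ t - K := by linarith
        have hint : 0 ≤ (p - 2) * (p * (p - 1) * (K ^ (p - 2) * (t - K))) := by
          apply mul_nonneg hpm20
          apply mul_nonneg (by nlinarith) (mul_nonneg (hKp _).le h4)
        linarith
  · -- T2 t² ≤ c (T1 t · t)
    intro t ht
    rw [hT1e t ht, hT2e t ht]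
    rcases eq_or_lt_of_le ht with h0 | h0
    · rw [← h0]
      rw [truncT1_of_le K p 0 hK.le, hz1]
      simp
    · by_cases htK : t ≤ K
      · rw [truncT1_of_le K p t htK,
          truncT2_of_le K p t htK]
        have hA : t ^ (p - 1) * t = t ^ p := by
          have h := Real.rpow_add h0 (p - 1) 1
          rw [show p - 1 + 1 = p by ring, Real.rpow_one] at h
          exact h.symm
        have hB : t ^ (p - 2) * t ^ 2 = t ^ p := by
          have h := Real.rpow_add h0 (p - 2) 2
          rw [show p - 2 + 2 = p by ring] at h
          rw [h]
          congr 1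
          rw [show ((2:ℝ)) = ((2:ℕ):ℝ) by norm_num, Real.rpow_natCast]
        rw [show p * (p - 1) * t ^ (p - 2) * t ^ 2
            = p * (p - 1) * (t ^ (p - 2) * t ^ 2) by ring, hB,
          show p * t ^ (p - 1) * t = p * (t ^ (p - 1) * t) by ring, hA]
        have hint : 0 ≤ (10 * (p + 1) ^ 2 * p - p * (p - 1)) * t ^ p := by
          apply mul_nonneg _ (Real.rpow_nonneg ht _)
          nlinarith [sq_nonneg p]
        linarith [hint]
      · rw [truncT1_of_gt K p t htK,
          truncT2_of_gt K p t htK, hbe]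
        push_neg at htK
        have hE : (0:ℝ) ≤ K ^ (p - 2) := (hKp _).le
        have h4 : 0 ≤ t - K := by linarith
        have A1 : 0 ≤ (10 * (p + 1) ^ 2 - (p - 1)) * (p * (K ^ (p - 2) * (K * t))) := by
          apply mul_nonneg (by nlinarith [sq_nonneg p])
          exact mul_nonneg hp0 (mul_nonneg hE (mul_nonneg hK.le h0.le))
        have A2 : 0 ≤ (10 * (p + 1) ^ 2 - 1)
            * (p * (p - 1) * (K ^ (p - 2) * ((t - K) * t))) := by
          apply mul_nonneg (by nlinarith [sq_nonneg p])
          exact mul_nonneg (by nlinarith) (mul_nonneg hE (mul_nonneg h4 h0.le))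
        linarith [A1, A2]
  · -- T1 t · t ≤ c T t
    intro t ht
    rw [hT1e t ht]
    rcases eq_or_lt_of_le ht with h0 | h0
    · rw [← h0]
      rw [truncT1_of_le K p 0 hK.le, hz1,
        truncT_of_le K p 0 hK.le, hz]
      simp
    · by_cases htK : t ≤ K
      · rw [truncT1_of_le K p t htK,
          truncT_of_le K p t htK]
        have hA : t ^ (p - 1) * t = t ^ p := by
          have h := Real.rpow_add h0 (p - 1) 1
          rw [show p - 1 + 1 = p by ring, Real.rpow_one] at h
          exact h.symm
        rw [show p * t ^ (p - 1) * t = p * (t ^ (p - 1) * t) by ring, hA]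
        have hint : 0 ≤ (10 * (p + 1) ^ 2 - p) * t ^ p := by
          apply mul_nonneg _ (Real.rpow_nonneg ht _)
          nlinarith [sq_nonneg p]
        linarith [hint]
      · rw [truncT1_of_gt K p t htK,
          truncT_of_gt K p t htK, truncG, hab, hbe]
        push_neg at htK
        have hE : (0:ℝ) ≤ K ^ (p - 2) := (hKp _).le
        have h4 : 0 ≤ t - K := by linarith
        have B1 : 0 ≤ (10 * (p + 1) ^ 2 - p) * (K ^ (p - 2) * K ^ 2) := by
          apply mul_nonneg _ (mul_nonneg hE (sq_nonneg K))
          nlinarith [sq_nonneg p]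
        have B2 : 0 ≤ (10 * (p + 1) ^ 2 - p) * (p * (K ^ (p - 2) * (K * (t - K)))) := by
          apply mul_nonneg (by nlinarith [sq_nonneg p])
          exact mul_nonneg hp0 (mul_nonneg hE (mul_nonneg hK.le h4))
        have B3 : 0 ≤ (10 * (p + 1) ^ 2 / 2 - 1)
            * (p * (p - 1) * (K ^ (p - 2) * (t - K) ^ 2)) := by
          apply mul_nonneg (by nlinarith [sq_nonneg p])
          exact mul_nonneg (by nlinarith) (mul_nonneg hE (sq_nonneg (t - K)))
        linarith [B1, B2, B3]

/-- Lemma 3.8 (i),(ii): the truncated power function `T_{q,K}`, a `C²`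
function on `[0,∞)` equal to `t^{2q}` for `t ≤ K`, strictly increasing and convex, with
quantitative growth estimates in which the constant `c` depends only on `q`. -/
theorem exists_truncated_power_function :
    ∀ q : ℝ, 1 ≤ q → ∃ c : ℝ, ∀ K : ℝ, 0 < K → ∃ T : ℝ → ℝ,
      (∀ t, 0 ≤ t → 0 ≤ T t) ∧
      ContDiffOn ℝ 2 T (Set.Ici 0) ∧
      StrictMonoOn T (Set.Ici 0) ∧
      ConvexOn ℝ (Set.Ici 0) T ∧
      (∀ t ∈ Set.Icc 0 K, T t = t ^ (2 * q)) ∧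
      (∀ t, 0 ≤ t →
        T t + d1 T t * t + d2 T t * t ^ 2
          ≤ c * min (K ^ (2 * q - 2) * t ^ 2) (t ^ (2 * q))) ∧
      (∀ t, 0 ≤ t → 0 ≤ d2 T t * t - d1 T t) ∧
      (∀ t, 0 ≤ t → d2 T t * t - d1 T t ≤ 2 * (q - 1) * d1 T t) ∧
      (∀ t, 0 ≤ t → d2 T t * t ^ 2 ≤ c * (d1 T t * t)) ∧
      (∀ t, 0 ≤ t → d1 T t * t ≤ c * T t) := by
  intro q hq
  refine ⟨10 * (2 * q + 1) ^ 2, ?_⟩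
  intro K hK
  obtain ⟨h1, h2, h3, h4, h5, h6, h7, h8, h9, h10⟩ :=
    trunc_main (2 * q) (by linarith) K hK
  refine ⟨truncT K (2 * q), h1, h2, h3, h4, h5, h6, h7, ?_, h9, h10⟩
  intro t ht
  have := h8 t ht
  calc d2 (truncT K (2 * q)) t * t - d1 (truncT K (2 * q)) t
      ≤ (2 * q - 2) * d1 (truncT K (2 * q)) t := this
    _ = 2 * (q - 1) * d1 (truncT K (2 * q)) t := by ring
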